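/- arXiv:0902.3036 — 2 statements merged into one kernel-verified Lean document; each statement's English description precedes it below -/
import Mathlib

section
/- If α ≥ 2, then for all t with 0 ≤ t ≤ π/2, (α+1)·sin t / (α + cos t) ≤ t ≤ (πα/2)·sin t / (α + cos t). -/
open Real Set

lemma aux_tcos_le_sin {t : ℝ} (h0 : 0 ≤ t) (h1 : t ≤ Real.pi / 2) :
    t * Real.cos t ≤ Real.sin t := by
  rcases eq_or_lt_of_le h1 with h | h
  · rw [h]; simp
  · rcases eq_or_lt_of_le h0 with h0' | h0'
    · simp [← h0']
    · have hc : 0 < Real.cos t :=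
        Real.cos_pos_of_mem_Ioo ⟨by linarith [Real.pi_pos], h⟩
      have htan := Real.lt_tan h0' h
      rw [Real.tan_eq_sin_div_cos] at htan
      nlinarith [(lt_div_iff₀ hc).mp htan]

theorem stmt_12 (α : ℝ) (hα : 2 ≤ α) (t : ℝ) (ht : 0 ≤ t) (ht1 : t ≤ Real.pi / 2) :
    (α + 1) * Real.sin t / (α + Real.cos t) ≤ t ∧
    t ≤ (Real.pi * α / 2) * Real.sin t / (α + Real.cos t) := by
  have hpi := Real.pi_gt_three
  have hD : 0 < α + Real.cos t := by
    have := Real.neg_one_le_cos t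
    linarith
  constructor
  · -- lower bound
    set f : ℝ → ℝ := fun x => x * (α + Real.cos x) - (α + 1) * Real.sin x with hf
    have hder : ∀ x : ℝ, HasDerivAt f (α - α * Real.cos x - x * Real.sin x) x := by
      intro x
      have h1 : HasDerivAt (fun x : ℝ => x * (α + Real.cos x))
          (1 * (α + Real.cos x) + x * (-Real.sin x)) x :=
        (hasDerivAt_id x).mul ((Real.hasDerivAt_cos x).const_add α)
      have h2 : HasDerivAt (fun x : ℝ => (α + 1) * Real.sin x)
          ((α + 1) * Real.cos x) x :=
        (Real.hasDerivAt_sin x).const_mul (α + 1)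
      have := h1.sub h2
      refine this.congr_deriv ?_
      ring
    have hderiv : deriv f = fun x => α - α * Real.cos x - x * Real.sin x :=
      funext fun x => (hder x).deriv
    have hmono : MonotoneOn f (Icc 0 (Real.pi / 2)) := by
      apply monotoneOn_of_deriv_nonneg (convex_Icc _ _)
      · exact (Continuous.continuousOn (by continuity))
      · intro x _
        exact (hder x).differentiableAt.differentiableWithinAt
      · intro x hx
        rw [interior_Icc] at hx
        rw [hderiv]
        have hx0 : 0 ≤ x := hx.1.le
        have hx1 : x ≤ Real.pi / 2 := hx.2.le
        have key := aux_tcos_le_sin (t := x / 2) (by linarith) (by linarith)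
        have hs : 0 ≤ Real.sin (x / 2) :=
          Real.sin_nonneg_of_nonneg_of_le_pi (by linarith) (by linarith)
        have h1 : Real.sin x = 2 * Real.sin (x / 2) * Real.cos (x / 2) := by
          rw [show x = 2 * (x / 2) by ring, Real.sin_two_mul]; ring_nf
        have h2 : Real.cos x = 1 - 2 * Real.sin (x / 2) ^ 2 := by
          have hc2 := Real.cos_two_mul (x / 2)
          rw [show 2 * (x / 2) = x by ring] at hc2
          have := Real.sin_sq_add_cos_sq (x / 2)
          linarith
        show 0 ≤ α - α * Real.cos x - x * Real.sin x
        rw [h1, h2]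
        nlinarith [sq_nonneg (Real.sin (x / 2)), mul_le_mul_of_nonneg_left key hs]
    have hmem0 : (0 : ℝ) ∈ Icc 0 (Real.pi / 2) := ⟨le_rfl, by linarith⟩
    have hmemt : t ∈ Icc 0 (Real.pi / 2) := ⟨ht, ht1⟩
    have := hmono hmem0 hmemt ht
    have hf0 : f 0 = 0 := by simp [hf]
    rw [hf0] at this
    have hft : 0 ≤ t * (α + Real.cos t) - (α + 1) * Real.sin t := this
    rw [div_le_iff₀ hD]
    linarith
  · -- upper bound
    set g : ℝ → ℝ := fun x => Real.pi * α / 2 * Real.sin x - x * (α + Real.cos x) with hg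
    have hder : ∀ x : ℝ, HasDerivAt g
        (Real.pi * α / 2 * Real.cos x - (α + Real.cos x) + x * Real.sin x) x := by
      intro x
      have h1 : HasDerivAt (fun x : ℝ => Real.pi * α / 2 * Real.sin x)
          (Real.pi * α / 2 * Real.cos x) x :=
        (Real.hasDerivAt_sin x).const_mul _
      have h2 : HasDerivAt (fun x : ℝ => x * (α + Real.cos x))
          (1 * (α + Real.cos x) + x * (-Real.sin x)) x :=
        (hasDerivAt_id x).mul ((Real.hasDerivAt_cos x).const_add α)
      have := h1.sub h2
      refine this.congr_deriv ?_
      ring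
    have hder2 : ∀ x : ℝ, HasDerivAt
        (fun x => Real.pi * α / 2 * Real.cos x - (α + Real.cos x) + x * Real.sin x)
        ((2 - Real.pi * α / 2) * Real.sin x + x * Real.cos x) x := by
      intro x
      have h1 : HasDerivAt (fun x : ℝ => Real.pi * α / 2 * Real.cos x)
          (Real.pi * α / 2 * (-Real.sin x)) x :=
        (Real.hasDerivAt_cos x).const_mul _
      have h2 : HasDerivAt (fun x : ℝ => α + Real.cos x) (-Real.sin x) x :=
        (Real.hasDerivAt_cos x).const_add α
      have h3 : HasDerivAt (fun x : ℝ => x * Real.sin x)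
          (1 * Real.sin x + x * Real.cos x) x :=
        (hasDerivAt_id x).mul (Real.hasDerivAt_sin x)
      have := (h1.sub h2).add h3
      refine this.congr_deriv ?_
      ring
    have hcc : ConcaveOn ℝ (Icc 0 (Real.pi / 2)) g := by
      apply concaveOn_of_hasDerivWithinAt2_nonpos (convex_Icc _ _)
        (f' := fun x => Real.pi * α / 2 * Real.cos x - (α + Real.cos x) + x * Real.sin x)
        (f'' := fun x => (2 - Real.pi * α / 2) * Real.sin x + x * Real.cos x)
      · exact Continuous.continuousOn (by continuity)
      · intro x _; exact (hder x).hasDerivWithinAt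
      · intro x _; exact (hder2 x).hasDerivWithinAt
      · intro x hx
        rw [interior_Icc] at hx
        have hx0 : 0 ≤ x := hx.1.le
        have hx1 : x ≤ Real.pi / 2 := hx.2.le
        have key := aux_tcos_le_sin hx0 hx1
        have hs : 0 ≤ Real.sin x :=
          Real.sin_nonneg_of_nonneg_of_le_pi hx0 (by linarith)
        have h3 : (0:ℝ) ≤ Real.pi * α / 2 - 3 := by nlinarith
        nlinarith [mul_nonneg hs h3]
    have hg0 : g 0 = 0 := by simp [hg]
    have hgpi : g (Real.pi / 2) = 0 := by
      simp [hg, Real.sin_pi_div_two, Real.cos_pi_div_two]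
      ring
    have hhalf : (0 : ℝ) < Real.pi / 2 := by linarith
    set b : ℝ := t / (Real.pi / 2) with hb
    have hb0 : 0 ≤ b := div_nonneg ht hhalf.le
    have hb1 : b ≤ 1 := (div_le_one hhalf).mpr ht1
    have hcomb := hcc.2 (Set.mem_Icc.mpr ⟨le_rfl, hhalf.le⟩)
      (Set.mem_Icc.mpr ⟨hhalf.le, le_rfl⟩)
      (show (0:ℝ) ≤ 1 - b by linarith) hb0 (show (1 - b) + b = 1 by ring)
    have heq : (1 - b) • (0 : ℝ) + b • (Real.pi / 2) = t := by
      simp [smul_eq_mul, hb]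
    rw [heq, hg0, hgpi] at hcomb
    simp at hcomb
    have hgt : 0 ≤ Real.pi * α / 2 * Real.sin t - t * (α + Real.cos t) := hcomb
    rw [le_div_iff₀ hD]
    linarith
end

section
/- If π/2 < α < 2, then for all t with 0 ≤ t ≤ π/2, 4(1 − 1/α²)·sin t / (α + cos t) ≤ t ≤ max{πα/2, α+1}·sin t / (α + cos t). -/
open Real Set

set_option maxHeartbeats 1600000


private lemma nonneg_of_deriv' {f f' : ℝ → ℝ} (hd : ∀ x, HasDerivAt f (f' x) x)
    (h0 : f 0 = 0) (hp : ∀ x, 0 ≤ x → 0 ≤ f' x) :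
    ∀ x, 0 ≤ x → 0 ≤ f x := by
  intro x hx
  have hmono : MonotoneOn f (Set.Ici 0) := by
    apply monotoneOn_of_deriv_nonneg (convex_Ici 0)
    · exact (continuous_iff_continuousAt.2 fun y => (hd y).continuousAt).continuousOn
    · intro y hy
      exact (hd y).differentiableAt.differentiableWithinAt
    · intro y hy
      rw [interior_Ici] at hy
      rw [(hd y).deriv]
      exact hp y hy.le
  calc (0:ℝ) = f 0 := h0.symm
    _ ≤ f x := hmono self_mem_Ici hx hx

private lemma myT3 (x : ℝ) (hx : 0 ≤ x) : x - x^3/6 ≤ Real.sin x := by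
  have key := nonneg_of_deriv' (f := fun z => Real.sin z - (z - z^3/6))
    (f' := fun z => Real.cos z - (1 - z^2/2)) ?_ (by norm_num) ?_ x hx
  · linarith
  · intro y
    have h : HasDerivAt (fun z : ℝ => Real.sin z - (z - z^3/6))
        (Real.cos y - (1 - (3:ℕ)*y^2/6)) y :=
      (Real.hasDerivAt_sin y).sub ((hasDerivAt_id y).sub ((hasDerivAt_pow 3 y).div_const 6))
    convert h using 1
    push_cast; ring
  · intro y hy
    have := Real.one_sub_sq_div_two_le_cos (x := y)
    linarith

private lemma myT4 (x : ℝ) (hx : 0 ≤ x) : Real.cos x ≤ 1 - x^2/2 + x^4/24 := by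
  have key := nonneg_of_deriv' (f := fun z => 1 - z^2/2 + z^4/24 - Real.cos z)
    (f' := fun z => Real.sin z - (z - z^3/6)) ?_ (by norm_num) ?_ x hx
  · linarith
  · intro y
    have h : HasDerivAt (fun z : ℝ => 1 - z^2/2 + z^4/24 - Real.cos z)
        (0 - (2:ℕ)*y^1/2 + (4:ℕ)*y^3/24 - (-Real.sin y)) y :=
      (((hasDerivAt_const y (1:ℝ)).sub ((hasDerivAt_pow 2 y).div_const 2)).add
        ((hasDerivAt_pow 4 y).div_const 24)).sub (Real.hasDerivAt_cos y)
    convert h using 1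
    push_cast; ring
  · intro y hy
    have := myT3 y hy
    linarith

private lemma myT5 (x : ℝ) (hx : 0 ≤ x) : Real.sin x ≤ x - x^3/6 + x^5/120 := by
  have key := nonneg_of_deriv' (f := fun z => z - z^3/6 + z^5/120 - Real.sin z)
    (f' := fun z => 1 - z^2/2 + z^4/24 - Real.cos z) ?_ (by norm_num) ?_ x hx
  · linarith
  · intro y
    have h : HasDerivAt (fun z : ℝ => z - z^3/6 + z^5/120 - Real.sin z)
        (1 - (3:ℕ)*y^2/6 + (5:ℕ)*y^4/120 - Real.cos y) y :=
      (((hasDerivAt_id y).sub ((hasDerivAt_pow 3 y).div_const 6)).add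
        ((hasDerivAt_pow 5 y).div_const 120)).sub (Real.hasDerivAt_sin y)
    convert h using 1
    push_cast; ring
  · intro y hy
    have := myT4 y hy
    linarith

private lemma myT6 (x : ℝ) (hx : 0 ≤ x) : 1 - x^2/2 + x^4/24 - x^6/720 ≤ Real.cos x := by
  have key := nonneg_of_deriv' (f := fun z => Real.cos z - (1 - z^2/2 + z^4/24 - z^6/720))
    (f' := fun z => (z - z^3/6 + z^5/120) - Real.sin z) ?_ (by norm_num) ?_ x hx
  · linarith
  · intro y
    have h : HasDerivAt (fun z : ℝ => Real.cos z - (1 - z^2/2 + z^4/24 - z^6/720))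
        ((-Real.sin y) - (0 - (2:ℕ)*y^1/2 + (4:ℕ)*y^3/24 - (6:ℕ)*y^5/720)) y :=
      (Real.hasDerivAt_cos y).sub ((((hasDerivAt_const y (1:ℝ)).sub
        ((hasDerivAt_pow 2 y).div_const 2)).add ((hasDerivAt_pow 4 y).div_const 24)).sub
        ((hasDerivAt_pow 6 y).div_const 720))
    convert h using 1
    push_cast; ring
  · intro y hy
    have := myT5 y hy
    linarith

private lemma myT7 (x : ℝ) (hx : 0 ≤ x) : x - x^3/6 + x^5/120 - x^7/5040 ≤ Real.sin x := by
  have key := nonneg_of_deriv' (f := fun z => Real.sin z - (z - z^3/6 + z^5/120 - z^7/5040))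
    (f' := fun z => Real.cos z - (1 - z^2/2 + z^4/24 - z^6/720)) ?_ (by norm_num) ?_ x hx
  · linarith
  · intro y
    have h : HasDerivAt (fun z : ℝ => Real.sin z - (z - z^3/6 + z^5/120 - z^7/5040))
        (Real.cos y - (1 - (3:ℕ)*y^2/6 + (5:ℕ)*y^4/120 - (7:ℕ)*y^6/5040)) y :=
      (Real.hasDerivAt_sin y).sub ((((hasDerivAt_id y).sub
        ((hasDerivAt_pow 3 y).div_const 6)).add ((hasDerivAt_pow 5 y).div_const 120)).sub
        ((hasDerivAt_pow 7 y).div_const 5040))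
    convert h using 1
    push_cast; ring
  · intro y hy
    have := myT6 y hy
    linarith



private lemma lower_key (α t : ℝ) (h1 : Real.pi / 2 < α) (h2 : α < 2)
    (ht : 0 ≤ t) (ht1 : t ≤ Real.pi / 2) :
    4 * (1 - 1 / α ^ 2) * Real.sin t ≤ t * (α + Real.cos t) := by
  have hπ1 : (3.1415:ℝ) < π := by linarith [Real.pi_gt_d6]
  have hπ2 : π < 3.1416 := by linarith [Real.pi_lt_d6]
  have hα0 : (0:ℝ) < α := by linarith
  have hαl : (1.5707:ℝ) < α := by linarith
  have hs5 := myT5 t ht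
  have hc6 := myT6 t ht
  have hcge0 : (0:ℝ) ≤ 4*(1-1/α^2) := by
    have h : 1/α^2 ≤ 1 := by
      rw [div_le_one (by positivity)]
      nlinarith
    linarith
  have hstep1 : 4*(1-1/α^2) * Real.sin t ≤ 4*(1-1/α^2) * (t - t^3/6 + t^5/120) :=
    mul_le_mul_of_nonneg_left hs5 hcge0
  have hstep3 : t*(α + (1 - t^2/2 + t^4/24 - t^6/720)) ≤ t*(α + Real.cos t) := by
    have := mul_le_mul_of_nonneg_left (add_le_add_left hc6 α) ht
    linarith
  have ht2 : t^2 ≤ 2.481 := by nlinarith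
  have hcub : 5*(2+α)^2 ≤ (α+1)*(3.519*α^2+24) := by nlinarith
  have hdisc : 14400*((2-α)*(2+α))^2 ≤ 2880*((2-α)^2*(α+1))*(3.519*α^2+24) := by
    nlinarith [mul_le_mul_of_nonneg_left hcub (sq_nonneg (2-α))]
  have hDpos : (0:ℝ) < 3.519*α^2+24 := by positivity
  have hquad : 0 ≤ 720*((2-α)^2*(α+1)) - 120*((2-α)*(2+α))*t^2 + (3.519*α^2+24)*(t^2)^2 := by
    nlinarith [hdisc, sq_nonneg (120*((2-α)*(2+α)) - 2*(3.519*α^2+24)*t^2), hDpos]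
  have hE : 0 ≤ 720*((2-α)^2*(α+1)) - 120*((2-α)*(2+α))*t^2 + 6*(α^2+4)*(t^2)^2 - α^2*(t^2)^3 := by
    nlinarith [hquad, mul_nonneg (mul_nonneg (sq_nonneg α) (sq_nonneg (t^2))) (by linarith : (0:ℝ) ≤ 2.481 - t^2)]
  have hmid : 4*(1-1/α^2) * (t - t^3/6 + t^5/120) ≤ t*(α + (1 - t^2/2 + t^4/24 - t^6/720)) := by
    have hkey : t*(α + (1 - t^2/2 + t^4/24 - t^6/720)) - 4*(1-1/α^2)*(t - t^3/6 + t^5/120)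
        = t * (720*((2-α)^2*(α+1)) - 120*((2-α)*(2+α))*t^2 + 6*(α^2+4)*(t^2)^2 - α^2*(t^2)^3) / (720*α^2) := by
      field_simp
      ring
    have hpos : 0 ≤ t * (720*((2-α)^2*(α+1)) - 120*((2-α)*(2+α))*t^2 + 6*(α^2+4)*(t^2)^2 - α^2*(t^2)^3) / (720*α^2) := by
      apply div_nonneg (mul_nonneg ht hE) (by positivity)
    linarith
  linarith



private lemma upper_key (α t : ℝ) (h1 : Real.pi / 2 < α) (h2 : α < 2)
    (ht : 0 ≤ t) (ht1 : t ≤ Real.pi / 2) :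
    t * (α + Real.cos t) ≤ max (Real.pi * α / 2) (α + 1) * Real.sin t := by
  have hπ1 : (3.1415:ℝ) < π := by linarith [Real.pi_gt_d6]
  have hπ2 : π < 3.1416 := by linarith [Real.pi_lt_d6]
  have hα0 : (0:ℝ) < α := by linarith
  have hαl : (1.5707:ℝ) < α := by linarith
  rcases le_or_gt t 1.25 with hcase | hcase
  · -- polynomial regime
    have hsin := myT7 t ht
    have hcos := myT4 t ht
    have ht2a : (0:ℝ) ≤ t^2 := sq_nonneg t
    have ht2b : t^2 ≤ 1.5625 := by nlinarith
    have ht4 : t^4 ≤ 1.5625*t^2 := by nlinarith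
    have ht6 : t^6 ≤ 2.44140625*t^2 := by nlinarith
    rcases max_cases (Real.pi * α / 2) (α + 1) with ⟨hMeq, hge⟩ | ⟨hMeq, hlt⟩
    · rw [hMeq]
      have hMpos : (0:ℝ) ≤ π*α/2 := by positivity
      have hsinstep : (π*α/2) * (t - t^3/6 + t^5/120 - t^7/5040) ≤ (π*α/2) * Real.sin t :=
        mul_le_mul_of_nonneg_left hsin hMpos
      have hcosstep : t*(α + Real.cos t) ≤ t*(α + (1 - t^2/2 + t^4/24)) :=
        mul_le_mul_of_nonneg_left (add_le_add_right hcos α) ht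
      have hσ : (0:ℝ) ≤ π*α/2 - (α+1) := by linarith
      have hαc : (1.7519:ℝ) ≤ α := by nlinarith
      have hK : (0.7388:ℝ) ≤ 1 - t^2/6 + t^4/120 - t^6/5040 := by nlinarith
      have hQa : t^2*(0.28076 - 0.15414*α) ≤
          (1/2-(α+1)/6)*t^2 + ((α+1)/120-1/24)*t^4 - ((α+1)/5040)*t^6 := by
        nlinarith [mul_nonneg ht2a (by linarith : (0:ℝ) ≤ 4 - α)]
      have hend : (0:ℝ) ≤ 0.7388*(π*α/2 - (α+1)) + 1.5625*(0.28076 - 0.15414*α) := by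
        nlinarith
      have hT : (0:ℝ) ≤ 0.7388*(π*α/2 - (α+1)) + t^2*(0.28076 - 0.15414*α) := by
        nlinarith [mul_nonneg hσ (by linarith : (0:ℝ) ≤ 1.5625 - t^2),
          mul_nonneg ht2a hend]
      have hfinal : (0:ℝ) ≤ (π*α/2 - (α+1))*(1 - t^2/6 + t^4/120 - t^6/5040)
          + ((1/2-(α+1)/6)*t^2 + ((α+1)/120-1/24)*t^4 - ((α+1)/5040)*t^6) := by
        nlinarith [mul_nonneg hσ (by linarith : (0:ℝ) ≤ (1 - t^2/6 + t^4/120 - t^6/5040) - 0.7388)]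
      nlinarith [mul_nonneg ht hfinal]
    · rw [hMeq]
      have hMpos : (0:ℝ) ≤ α+1 := by linarith
      have hsinstep : (α+1) * (t - t^3/6 + t^5/120 - t^7/5040) ≤ (α+1) * Real.sin t :=
        mul_le_mul_of_nonneg_left hsin hMpos
      have hcosstep : t*(α + Real.cos t) ≤ t*(α + (1 - t^2/2 + t^4/24)) :=
        mul_le_mul_of_nonneg_left (add_le_add_right hcos α) ht
      have hαu : α ≤ 1.7521 := by nlinarith
      have hQa : t^2*(0.28076 - 0.15414*α) ≤
          (1/2-(α+1)/6)*t^2 + ((α+1)/120-1/24)*t^4 - ((α+1)/5040)*t^6 := by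
        nlinarith [mul_nonneg ht2a (by linarith : (0:ℝ) ≤ 4 - α)]
      have hfinal : (0:ℝ) ≤ (1/2-(α+1)/6)*t^2 + ((α+1)/120-1/24)*t^4 - ((α+1)/5040)*t^6 := by
        nlinarith [mul_nonneg ht2a (by linarith : (0:ℝ) ≤ 0.28076 - 0.15414*α)]
      nlinarith [mul_nonneg ht hfinal]
  · -- near π/2 regime
    set u : ℝ := π/2 - t with hu
    have hu0 : 0 ≤ u := by simp only [hu]; linarith
    have huu : u ≤ 0.3208 := by simp only [hu]; linarith
    have hcost : Real.cos t ≤ u := by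
      have h : Real.cos t = Real.sin u := by
        rw [show t = π/2 - u by simp [hu], Real.cos_pi_div_two_sub]
      rw [h]; exact Real.sin_le hu0
    have hsint : 1 - u^2/2 ≤ Real.sin t := by
      have h : Real.sin t = Real.cos u := by
        rw [show t = π/2 - u by simp [hu], Real.sin_pi_div_two_sub]
      rw [h]; exact Real.one_sub_sq_div_two_le_cos
    have ht' : t = π/2 - u := by simp [hu]
    rcases max_cases (Real.pi * α / 2) (α + 1) with ⟨hMeq, hge⟩ | ⟨hMeq, hlt⟩
    · rw [hMeq]
      have hMpos : (0:ℝ) ≤ π*α/2 := by positivity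
      have hαc : (1.7519:ℝ) ≤ α := by nlinarith
      have hstep1 : t*(α + Real.cos t) ≤ t*(α + u) :=
        mul_le_mul_of_nonneg_left (add_le_add_right hcost α) ht
      have hstep3 : (π*α/2)*(1 - u^2/2) ≤ (π*α/2) * Real.sin t :=
        mul_le_mul_of_nonneg_left hsint hMpos
      have hF : 0 ≤ α - π/2 - u*(π*α/4 - 1) := by
        nlinarith [mul_nonneg (by linarith : (0:ℝ) ≤ 0.3208 - u) (by nlinarith : (0:ℝ) ≤ π*α/4 - 1)]
      have hmid : t*(α + u) ≤ (π*α/2)*(1 - u^2/2) := by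
        rw [ht']
        nlinarith [mul_nonneg hu0 hF]
      exact hstep1.trans (hmid.trans hstep3)
    · rw [hMeq]
      have hMpos : (0:ℝ) ≤ α+1 := by linarith
      have hαu : α ≤ 1.7521 := by nlinarith
      have hσ : (0:ℝ) ≤ α + 1 - π*α/2 := by linarith
      have hstep1 : t*(α + Real.cos t) ≤ t*(α + u) :=
        mul_le_mul_of_nonneg_left (add_le_add_right hcost α) ht
      have hstep3 : (α+1)*(1 - u^2/2) ≤ (α+1) * Real.sin t :=
        mul_le_mul_of_nonneg_left hsint hMpos
      have hend : (0:ℝ) ≤ (α + 1 - π*α/2) + 0.3208*(α - π/2) - 0.051456*(α-1) := by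
        nlinarith
      have hmid : t*(α + u) ≤ (α+1)*(1 - u^2/2) := by
        rw [ht']
        nlinarith [mul_nonneg hu0 hend, mul_nonneg (mul_nonneg hu0 (by linarith : (0:ℝ) ≤ 0.3208 - u)) (by linarith : (0:ℝ) ≤ α - 1), mul_nonneg hσ (by linarith : (0:ℝ) ≤ 0.3208 - u)]
      exact hstep1.trans (hmid.trans hstep3)

theorem stmt_14 (α : ℝ) (h1 : Real.pi / 2 < α) (h2 : α < 2)
    (t : ℝ) (ht : 0 ≤ t) (ht1 : t ≤ Real.pi / 2) :
    4 * (1 - 1 / α ^ 2) * Real.sin t / (α + Real.cos t) ≤ t ∧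
    t ≤ max (Real.pi * α / 2) (α + 1) * Real.sin t / (α + Real.cos t) := by
  have hα0 : (0:ℝ) < α := lt_trans (by positivity) h1
  have hcos0 : 0 ≤ Real.cos t := Real.cos_nonneg_of_mem_Icc ⟨by linarith [Real.pi_pos], ht1⟩
  have hpos : 0 < α + Real.cos t := by linarith
  constructor
  · rw [div_le_iff₀ hpos]
    have := lower_key α t h1 h2 ht ht1
    linarith [this]
  · rw [le_div_iff₀ hpos]
    have := upper_key α t h1 h2 ht ht1
    linarith [this]
end
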